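/- Let σ : A* → A* be a primitive morphism on a finite alphabet A of size d, prolongable on a letter a. Then every return word in the language of σ to any word of length 2 has length at most 2·|σ|^{2d²}. -/

import Mathlib

open List

/-- Extension of a substitution to words. -/
def applyW {A : Type*} (σ : A → List A) (w : List A) : List A := w.flatMap σ

/-- `σⁿ` as a map on letters. -/
def powL {A : Type*} (σ : A → List A) (n : ℕ) (a : A) : List A := (applyW σ)^[n] [a]

/-- `σⁿ` as a map on words. -/
def iterW {A : Type*} (σ : A → List A) (n : ℕ) (w : List A) : List A := (applyW σ)^[n] w

/-- A substitution is non-erasing if no letter maps to the empty word. -/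
def NonErasing {A : Type*} (σ : A → List A) : Prop := ∀ a, σ a ≠ []

/-- A substitution is primitive if some power maps any letter to a word containing
every letter. -/
def PrimitiveSub {A : Type*} (σ : A → List A) : Prop :=
  ∃ k : ℕ, ∀ b c : A, b ∈ powL σ k c

/-- `σ` is prolongable on `a` if `σ a = a u` with `u` nonempty. -/
def Prolongable {A : Type*} (σ : A → List A) (a : A) : Prop :=
  ∃ u : List A, u ≠ [] ∧ σ a = a :: u

/-- `|σⁿ|`, the maximal length of the image of a letter under `σⁿ`. -/
def maxLen {A : Type*} [Fintype A] (σ : A → List A) (n : ℕ) : ℕ :=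
  Finset.univ.sup fun a => (powL σ n a).length

/-- `⟨σⁿ⟩`, the minimal length of the image of a letter under `σⁿ`. -/
def minLen {A : Type*} [Fintype A] [Nonempty A] (σ : A → List A) (n : ℕ) : ℕ :=
  Finset.univ.inf' Finset.univ_nonempty fun a => (powL σ n a).length

/-- The factor `x_{[i,j)}` of a two-sided sequence. -/
def seg {A : Type*} (x : ℤ → A) (i j : ℤ) : List A :=
  (List.range (j - i).toNat).map fun t => x (i + t)

/-- `w` is a factor of the two-sided sequence `x`. -/
def FactorOf {A : Type*} (x : ℤ → A) (w : List A) : Prop :=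
  ∃ i : ℤ, w = seg x i (i + w.length)

/-- The language of a substitution: words occurring in some `σⁿ(c)`. -/
def LangOf {A : Type*} (σ : A → List A) (w : List A) : Prop :=
  ∃ n : ℕ, ∃ c : A, w <:+: powL σ n c

/-- The map `f^{(1)}` associated with the substitution `τ` and the sequence `x`;
the map `f^{(p)}` of `σ` is obtained as `F (powL σ p) x`. -/
def F {A : Type*} (τ : A → List A) (x : ℤ → A) (i : ℤ) : ℤ :=
  if 0 ≤ i then (((seg x 0 i).flatMap τ).length : ℤ)
  else -(((seg x i 0).flatMap τ).length : ℤ)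

/-- `x` is a (two-sided) fixed point of `τ`:  `τ (x i)` is the block of `x`
between `f^{(1)}(i)` and `f^{(1)}(i+1)`. -/
def IsFixedPoint {A : Type*} (τ : A → List A) (x : ℤ → A) : Prop :=
  ∀ i : ℤ, seg x (F τ x i) (F τ x (i + 1)) = τ (x i)

/-- `x` is an admissible fixed point of `τ`: it is a fixed point and the word
`x₋₁x₀` occurs in some `τⁿ(c)`. -/
def Admissible {A : Type*} (τ : A → List A) (x : ℤ → A) : Prop :=
  IsFixedPoint τ x ∧ ∃ n : ℕ, ∃ c : A, [x (-1), x 0] <:+: powL τ n c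

/-- `τ` is recognizable on `x` with constant `L`. -/
def RecogWith {A : Type*} (τ : A → List A) (x : ℤ → A) (L : ℤ) : Prop :=
  0 < L ∧ ∀ i m : ℤ,
    seg x (m - L) (m + L + 1) = seg x (F τ x i - L) (F τ x i + L + 1) →
    ∃ j : ℤ, m = F τ x j ∧ x i = x j

/-- `x` is `k`-power-free: no nonempty word `w` has `w^k` as a factor of `x`. -/
def PowerFree {A : Type*} (x : ℤ → A) (k : ℕ) : Prop :=
  ∀ w : List A, w ≠ [] → ¬ FactorOf x (List.replicate k w).flatten

/-- `x` is recurrent: every factor occurs infinitely many times. -/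
def Recurrent {A : Type*} (x : ℤ → A) : Prop :=
  ∀ w : List A, FactorOf x w → ∀ N : ℤ, ∃ i : ℤ, N ≤ i ∧ w = seg x i (i + w.length)

/-- Number of occurrences of `u` in `w`. -/
def occCount {A : Type*} [DecidableEq A] (u w : List A) : ℕ :=
  (List.range (w.length + 1)).countP fun i => decide (u <+: w.drop i)

/-- `r` is a return word to `u` in `x`. -/
def ReturnWordOf {A : Type*} [DecidableEq A] (x : ℤ → A) (u r : List A) : Prop :=
  FactorOf x (r ++ u) ∧ u <+: (r ++ u) ∧ occCount u (r ++ u) = 2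

/-- `r` is a return word to `u` in the language of `σ`. -/
def ReturnWordLang {A : Type*} [DecidableEq A] (σ : A → List A) (u r : List A) : Prop :=
  LangOf σ (r ++ u) ∧ u <+: (r ++ u) ∧ occCount u (r ++ u) = 2

/-- `x` is linearly recurrent with constant `K`. -/
def LinRec {A : Type*} [DecidableEq A] (x : ℤ → A) (K : ℕ) : Prop :=
  Recurrent x ∧ ∀ u r : List A, FactorOf x u → ReturnWordOf x u r → r.length ≤ K * u.length

/-- `x` is aperiodic (not periodic). -/
def AperiodicSeq {A : Type*} (x : ℤ → A) : Prop :=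
  ¬ ∃ p : ℤ, 0 < p ∧ ∀ i : ℤ, x (i + p) = x i

/-- Factor complexity of `x`. -/
noncomputable def complexity {A : Type*} (x : ℤ → A) (n : ℕ) : ℕ :=
  Set.ncard {w : List A | FactorOf x w ∧ w.length = n}

section Aux

variable {A : Type*}

theorem applyW_append (σ : A → List A) (x y : List A) :
    applyW σ (x ++ y) = applyW σ x ++ applyW σ y := by
  simp [applyW]

theorem applyW_singleton (σ : A → List A) (b : A) : applyW σ [b] = σ b := by
  simp [applyW]

theorem iterW_nil (σ : A → List A) (k : ℕ) : iterW σ k [] = [] := by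
  induction k with
  | zero => rfl
  | succ n ih =>
    show (applyW σ)^[n+1] [] = []
    rw [Function.iterate_succ_apply]
    show iterW σ n (applyW σ []) = []
    simpa [applyW] using ih

theorem iterW_append (σ : A → List A) (k : ℕ) (x y : List A) :
    iterW σ k (x ++ y) = iterW σ k x ++ iterW σ k y := by
  induction k generalizing x y with
  | zero => rfl
  | succ n ih =>
    show (applyW σ)^[n+1] (x ++ y) = (applyW σ)^[n+1] x ++ (applyW σ)^[n+1] y
    rw [Function.iterate_succ_apply, Function.iterate_succ_apply,
      Function.iterate_succ_apply, applyW_append]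
    exact ih _ _

theorem iterW_infix (σ : A → List A) (k : ℕ) {v w : List A} (h : v <:+: w) :
    iterW σ k v <:+: iterW σ k w := by
  obtain ⟨s, t, rfl⟩ := h
  rw [iterW_append, iterW_append]
  exact ⟨iterW σ k s, iterW σ k t, rfl⟩

theorem iterW_flatMap (σ : A → List A) (k : ℕ) (w : List A) :
    iterW σ k w = w.flatMap (fun e => powL σ k e) := by
  induction w with
  | nil => simp [iterW_nil]
  | cons e w' ih =>
    have : (e :: w') = [e] ++ w' := rfl
    rw [this, iterW_append, List.flatMap_append, ← ih]
    congr 1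
    simp [iterW, powL]

theorem powL_one (σ : A → List A) (b : A) : powL σ 1 b = σ b := by
  show (applyW σ)^[1] [b] = σ b
  simp [applyW]

theorem powL_succ' (σ : A → List A) (k : ℕ) (c : A) :
    powL σ (k+1) c = applyW σ (powL σ k c) :=
  Function.iterate_succ_apply' _ _ _

theorem powL_add (σ : A → List A) (n m : ℕ) (c : A) :
    powL σ (n + m) c = iterW σ n (powL σ m c) :=
  Function.iterate_add_apply _ _ _ _

theorem infix_powL_comp (σ : A → List A) {w : List A} {n m : ℕ} {e c : A}
    (h1 : w <:+: powL σ n e) (h2 : e ∈ powL σ m c) : w <:+: powL σ (n + m) c := by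
  obtain ⟨s, t, hst⟩ := List.append_of_mem h2
  have he : [e] <:+: powL σ m c := ⟨s, t, by rw [hst]; simp⟩
  have : powL σ n e <:+: iterW σ n (powL σ m c) := iterW_infix σ n he
  rw [← powL_add] at this
  exact h1.trans this

theorem mem_powL_comp (σ : A → List A) {b : A} {n m : ℕ} {e c : A}
    (h1 : b ∈ powL σ n e) (h2 : e ∈ powL σ m c) : b ∈ powL σ (n + m) c := by
  obtain ⟨s, t, hst⟩ := List.append_of_mem h1
  have : [b] <:+: powL σ (n + m) c :=
    infix_powL_comp σ ⟨s, t, by rw [hst]; simp⟩ h2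
  exact this.mem (by simp)

end Aux
section Aux2

variable {A : Type*}

theorem nonErasing_of [Nonempty A] {σ : A → List A} (hσ : PrimitiveSub σ) {a : A}
    (ha : Prolongable σ a) : NonErasing σ := by
  obtain ⟨k, hk⟩ := hσ
  intro c hc
  rcases Nat.eq_zero_or_pos k with hk0 | hkpos
  · subst hk0
    -- powL σ 0 c = [c], so all letters equal
    have hac : a = c := by simpa [powL] using hk a c
    obtain ⟨u, hu, hau⟩ := ha
    rw [hac, hc] at hau
    exact (List.cons_ne_nil _ _ hau.symm).elim
  · obtain ⟨k', rfl⟩ : ∃ k', k = k' + 1 := ⟨k - 1, by omega⟩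
    have hnil : powL σ (k' + 1) c = [] := by
      show (applyW σ)^[k' + 1] [c] = []
      rw [Function.iterate_succ_apply]
      show iterW σ k' (applyW σ [c]) = []
      rw [applyW_singleton, hc, iterW_nil]
    have := hk a c
    rw [hnil] at this
    simp at this

theorem powL_ne_nil {σ : A → List A} (hne : NonErasing σ) (m : ℕ) (b : A) :
    powL σ m b ≠ [] := by
  induction m with
  | zero => simp [powL]
  | succ n ih =>
    rw [powL_succ']
    obtain ⟨c, w', hw⟩ := List.exists_cons_of_ne_nil ih
    rw [hw]
    show (σ c ++ w'.flatMap σ) ≠ []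
    simp [hne c]

theorem length_sigma_le [Fintype A] (σ : A → List A) (b : A) :
    (σ b).length ≤ maxLen σ 1 := by
  have := Finset.le_sup (f := fun a => (powL σ 1 a).length) (Finset.mem_univ b)
  rw [maxLen]
  simpa [powL_one] using this

theorem one_le_maxLen [Fintype A] [Nonempty A] {σ : A → List A} (hne : NonErasing σ) :
    1 ≤ maxLen σ 1 := by
  obtain ⟨b⟩ := ‹Nonempty A›
  have h1 : 1 ≤ (σ b).length := List.length_pos_iff.mpr (hne b)
  exact le_trans h1 (length_sigma_le σ b)

theorem length_applyW_le [Fintype A] (σ : A → List A) (w : List A) :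
    (applyW σ w).length ≤ maxLen σ 1 * w.length := by
  induction w with
  | nil => simp [applyW]
  | cons c w' ih =>
    show ((c :: w').flatMap σ).length ≤ _
    rw [List.flatMap_cons, List.length_append, List.length_cons]
    calc (σ c).length + (w'.flatMap σ).length
        ≤ maxLen σ 1 + maxLen σ 1 * w'.length := by
          exact Nat.add_le_add (length_sigma_le σ c) ih
      _ = maxLen σ 1 * (w'.length + 1) := by ring

theorem length_powL_le [Fintype A] (σ : A → List A) (m : ℕ) (b : A) :
    (powL σ m b).length ≤ maxLen σ 1 ^ m := by
  induction m with
  | zero => simp [powL]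
  | succ n ih =>
    rw [powL_succ']
    calc (applyW σ (powL σ n b)).length ≤ maxLen σ 1 * (powL σ n b).length :=
          length_applyW_le σ _
      _ ≤ maxLen σ 1 * maxLen σ 1 ^ n := Nat.mul_le_mul_left _ ih
      _ = maxLen σ 1 ^ (n + 1) := by ring

theorem infix_append_cases {w s t : List A} (h : w <:+: s ++ t) :
    w <:+: s ∨ w <:+: t ∨
      ∃ w1 w2, w = w1 ++ w2 ∧ w1 ≠ [] ∧ w2 ≠ [] ∧ w1 <:+ s ∧ w2 <+: t := by
  obtain ⟨p, q, hpq⟩ := h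
  rw [List.append_assoc] at hpq
  rcases List.append_eq_append_iff.mp hpq with ⟨a', hs, hwq⟩ | ⟨c', hp, ht⟩
  · rcases List.append_eq_append_iff.mp hwq with ⟨w', ha', hq⟩ | ⟨s'', hw, ht2⟩
    · left; exact ⟨p, w', by rw [hs, ha', List.append_assoc]⟩
    · rcases eq_or_ne a' [] with rfl | ha'ne
      · right; left
        simp only [List.nil_append] at hw
        subst hw
        exact ⟨[], q, by rw [ht2]; simp⟩
      · rcases eq_or_ne s'' [] with rfl | hs''ne
        · left
          exact ⟨p, [], by rw [hs, hw]; simp⟩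
        · right; right
          exact ⟨a', s'', hw, ha'ne, hs''ne, ⟨p, hs.symm⟩, ⟨q, ht2.symm⟩⟩
  · right; left
    exact ⟨c', q, by rw [ht, List.append_assoc]⟩

theorem desub {σ : A → List A} (hne : NonErasing σ) :
    ∀ (v w : List A), w ≠ [] → w.length ≤ 2 → w <:+: applyW σ v →
      ∃ v', v' ≠ [] ∧ v'.length ≤ 2 ∧ v' <:+: v ∧ w <:+: applyW σ v' := by
  intro v w hwne hwlen hinf
  interval_cases h : w.length
  · exact absurd (List.length_eq_zero_iff.mp h) hwne
  · -- length 1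
    obtain ⟨x, rfl⟩ := List.length_eq_one_iff.mp h
    have hx : x ∈ applyW σ v := hinf.mem (by simp)
    obtain ⟨e, hev, hxe⟩ := List.mem_flatMap.mp hx
    obtain ⟨s, t, hst⟩ := List.append_of_mem hev
    refine ⟨[e], by simp, by simp, ⟨s, t, by rw [hst]; simp⟩, ?_⟩
    rw [applyW_singleton]
    obtain ⟨s2, t2, hst2⟩ := List.append_of_mem hxe
    exact ⟨s2, t2, by rw [hst2]; simp⟩
  · -- length 2
    obtain ⟨x, y, rfl⟩ := List.length_eq_two.mp h
    clear hwne hwlen h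
    induction v with
    | nil =>
      have := hinf.length_le
      simp [applyW] at this
    | cons e v2 ih =>
      rw [show applyW σ (e :: v2) = σ e ++ applyW σ v2 from List.flatMap_cons .. ] at hinf
      rcases infix_append_cases hinf with h1 | h2 | ⟨w1, w2, heq, h1ne, h2ne, h1s, h2p⟩
      · refine ⟨[e], by simp, by simp, ?_, by rwa [applyW_singleton]⟩
        exact ⟨[], v2, by simp⟩
      · obtain ⟨v', h1, h2, h3, h4⟩ := ih h2
        exact ⟨v', h1, h2, List.infix_cons h3, h4⟩
      · -- split case: w1 = [x], w2 = [y]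
        have hl : w1.length + w2.length = 2 := by
          have := congrArg List.length heq; simpa using this.symm
        have hw1 : w1 = [x] ∧ w2 = [y] := by
          have l1 : w1.length = 1 := by
            have := List.length_pos_iff.mpr h1ne
            have := List.length_pos_iff.mpr h2ne
            omega
          obtain ⟨x', rfl⟩ := List.length_eq_one_iff.mp l1
          have : [x, y] = x' :: w2 := heq
          simp at this
          exact ⟨by rw [this.1], this.2.symm⟩
        obtain ⟨rfl, rfl⟩ := hw1
        have hv2ne : v2 ≠ [] := by
          rintro rfl
          have := h2p.length_le
          simp [applyW] at this
        obtain ⟨e2, v3, rfl⟩ := List.exists_cons_of_ne_nil hv2ne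
        have hy : [y] <+: σ e2 := by
          rw [show applyW σ (e2 :: v3) = σ e2 ++ applyW σ v3 from List.flatMap_cons .. ] at h2p
          obtain ⟨z, s', hz⟩ := List.exists_cons_of_ne_nil (hne e2)
          obtain ⟨q, hq⟩ := h2p
          rw [hz] at hq ⊢
          simp only [List.cons_append, List.singleton_append] at hq
          have : y = z := by injection hq
          rw [this]
          exact ⟨s', rfl⟩
        refine ⟨[e, e2], by simp, by simp, ⟨[], v3, by simp⟩, ?_⟩
        obtain ⟨s1, hs1⟩ := h1s
        obtain ⟨s2, hs2⟩ := hy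
        refine ⟨s1, s2, ?_⟩
        show s1 ++ [x, y] ++ s2 = applyW σ ([e] ++ [e2])
        rw [applyW_append, applyW_singleton, applyW_singleton, ← hs1, ← hs2]
        simp

end Aux2
section Aux3

variable {A : Type*}

/-- Chain of ancestors for letter membership. -/
theorem chainLetter (σ : A → List A) :
    ∀ (k : ℕ) (b c : A), b ∈ powL σ k c →
      ∃ f : ℕ → A, ∀ i ≤ k, f i ∈ powL σ (k - i) c ∧ b ∈ powL σ i (f i) := by
  intro k
  induction k with
  | zero =>
    intro b c hb
    refine ⟨fun _ => b, ?_⟩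
    intro i hi
    interval_cases i
    exact ⟨hb, by simp [powL]⟩
  | succ n ih =>
    intro b c hb
    have hb' : b ∈ iterW σ n (σ c) := by
      have : powL σ (n + 1) c = iterW σ n (applyW σ [c]) := Function.iterate_succ_apply _ _ _
      rw [this, applyW_singleton] at hb
      exact hb
    rw [iterW_flatMap] at hb'
    obtain ⟨e, hec, hbe⟩ := List.mem_flatMap.mp hb'
    obtain ⟨f', hf'⟩ := ih b e hbe
    refine ⟨fun i => if i = n + 1 then c else f' i, ?_⟩
    intro i hi
    by_cases hieq : i = n + 1
    · subst hieq
      simp only [if_pos rfl]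
      exact ⟨by simp [powL], hb⟩
    · have hle : i ≤ n := by omega
      simp only [if_neg hieq]
      obtain ⟨h1, h2⟩ := hf' i hle
      have hec' : e ∈ powL σ 1 c := by rw [powL_one]; exact hec
      have := mem_powL_comp σ h1 hec'
      refine ⟨?_, h2⟩
      have harith : n - i + 1 = n + 1 - i := by omega
      rwa [harith] at this

/-- Shortest-path bound: reachability within `card A - 1` steps. -/
theorem reach_small [Fintype A] (σ : A → List A) (b c : A) (h : ∃ k, b ∈ powL σ k c) :
    ∃ k < Fintype.card A, b ∈ powL σ k c := by
  classical
  set P : ℕ → Prop := fun k => b ∈ powL σ k c with hP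
  have hfind := Nat.find_spec h
  set k₀ := Nat.find h with hk₀
  refine ⟨k₀, ?_, hfind⟩
  by_contra hge
  push_neg at hge
  obtain ⟨f, hf⟩ := chainLetter σ k₀ b c hfind
  set d := Fintype.card A
  have hlen : ∀ i : Fin (d + 1), (i : ℕ) ≤ k₀ := fun i => by
    have := i.isLt; omega
  obtain ⟨i, j, hij, hfij⟩ :=
    Fintype.exists_ne_map_eq_of_card_lt (fun i : Fin (d + 1) => f i) (by simp; exact le_rfl)
  -- wlog i < j
  have hik : (i : ℕ) ≤ k₀ := hlen i
  have hjk : (j : ℕ) ≤ k₀ := hlen j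
  rcases lt_or_gt_of_ne (fun hh : (i : ℕ) = (j : ℕ) => hij (Fin.ext hh)) with hlt | hgt
  · obtain ⟨h1, _⟩ := hf j (hlen j)
    obtain ⟨_, h2⟩ := hf i (hlen i)
    rw [hfij] at h2
    have hmem := mem_powL_comp σ h2 h1
    have hfle := Nat.find_le (h := h) hmem
    omega
  · obtain ⟨h1, _⟩ := hf i (hlen i)
    obtain ⟨_, h2⟩ := hf j (hlen j)
    rw [← hfij] at h2
    have hmem := mem_powL_comp σ h2 h1
    have hfle := Nat.find_le (h := h) hmem
    omega

theorem loop_a {σ : A → List A} {a : A} (ha : Prolongable σ a) (m : ℕ) :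
    a ∈ powL σ m a := by
  induction m with
  | zero => simp [powL]
  | succ n ih =>
    have h1 : a ∈ powL σ 1 a := by
      rw [powL_one]
      obtain ⟨u, _, hau⟩ := ha
      rw [hau]; simp
    have := mem_powL_comp σ h1 ih
    rwa [show 1 + n = n + 1 by omega] at this

theorem reach_all [Fintype A] [Nonempty A] {σ : A → List A} (hσ : PrimitiveSub σ)
    {a : A} (ha : Prolongable σ a) (b c : A) (m : ℕ)
    (hm : 2 * (Fintype.card A - 1) ≤ m) : b ∈ powL σ m c := by
  obtain ⟨k, hk⟩ := hσ
  set d := Fintype.card A with hd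
  have hd1 : 1 ≤ d := Fintype.card_pos
  -- a ∈ powL σ m' c for every m' ≥ d - 1
  have hac : ∀ (c : A) (m' : ℕ), d - 1 ≤ m' → a ∈ powL σ m' c := by
    intro c m' hm'
    obtain ⟨k', hk'd, hk'⟩ := reach_small σ a c ⟨k, hk a c⟩
    have hloop := loop_a ha (m' - k')
    have := mem_powL_comp σ hloop hk'
    rwa [show m' - k' + k' = m' by omega] at this
  -- b ∈ powL σ m' a for every m' ≥ d - 1
  have hba : ∀ (b : A) (m' : ℕ), d - 1 ≤ m' → b ∈ powL σ m' a := by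
    intro b m' hm'
    obtain ⟨k', hk'd, hk'⟩ := reach_small σ b a ⟨k, hk b a⟩
    have hloop := loop_a ha (m' - k')
    have := mem_powL_comp σ hk' hloop
    rwa [show k' + (m' - k') = m' by omega] at this
  have h1 : a ∈ powL σ (d - 1) c := hac c _ le_rfl
  have h2 : b ∈ powL σ (m - (d - 1)) a := hba b _ (by omega)
  have := mem_powL_comp σ h2 h1
  rwa [show m - (d - 1) + (d - 1) = m by omega] at this

end Aux3
section Aux4

variable {A : Type*}

theorem applyW_infix (σ : A → List A) {v w : List A} (h : v <:+: w) :
    applyW σ v <:+: applyW σ w := by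
  obtain ⟨s, t, rfl⟩ := h
  rw [applyW_append, applyW_append]
  exact ⟨applyW σ s, applyW σ t, rfl⟩

theorem chainWord {σ : A → List A} (hne : NonErasing σ) :
    ∀ (n : ℕ) (u : List A), u ≠ [] → u.length ≤ 2 → (∃ c, u <:+: powL σ n c) →
      ∃ f : ℕ → List A, ∀ i ≤ n, f i ≠ [] ∧ (f i).length ≤ 2 ∧
        (∃ c, f i <:+: powL σ (n - i) c) ∧ u <:+: iterW σ i (f i) := by
  intro n
  induction n with
  | zero =>
    intro u hune hulen hwit
    refine ⟨fun _ => u, ?_⟩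
    intro i hi
    interval_cases i
    exact ⟨hune, hulen, hwit, List.infix_rfl⟩
  | succ n ih =>
    intro u hune hulen hwit
    obtain ⟨c, hc⟩ := hwit
    rw [powL_succ'] at hc
    obtain ⟨v', hv'ne, hv'len, hv'inf, huv'⟩ := desub hne (powL σ n c) u hune hulen hc
    obtain ⟨f', hf'⟩ := ih v' hv'ne hv'len ⟨c, hv'inf⟩
    refine ⟨fun i => if i = 0 then u else f' (i - 1), ?_⟩
    intro i hi
    rcases Nat.eq_zero_or_pos i with rfl | hipos
    · show u ≠ [] ∧ u.length ≤ 2 ∧ (∃ c, u <:+: powL σ (n + 1 - 0) c) ∧ u <:+: iterW σ 0 u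
      exact ⟨hune, hulen, ⟨c, by rw [Nat.sub_zero, powL_succ']; exact hc⟩, List.infix_rfl⟩
    · obtain ⟨j, rfl⟩ : ∃ j, i = j + 1 := ⟨i - 1, by omega⟩
      simp only [Nat.add_sub_cancel, if_neg (Nat.succ_ne_zero j)]
      obtain ⟨h1, h2, h3, h4⟩ := hf' j (by omega)
      refine ⟨h1, h2, by simpa using h3, ?_⟩
      have step : applyW σ (iterW σ j (f' j)) = iterW σ (j + 1) (f' j) :=
        (Function.iterate_succ_apply' _ _ _).symm
      calc u <:+: applyW σ v' := huv'
        _ <:+: applyW σ (iterW σ j (f' j)) := applyW_infix σ h4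
        _ = iterW σ (j + 1) (f' j) := step

theorem list_eq_pair [Inhabited A] {l : List A} (h : l.length = 2) :
    l = [l.headI, l.tail.headI] := by
  obtain ⟨x, y, rfl⟩ := List.length_eq_two.mp h
  simp

theorem lang2_small [Fintype A] [Nonempty A] {σ : A → List A} (hne : NonErasing σ)
    (u : List A) (hu2 : u.length = 2) (hL : LangOf σ u) :
    ∃ n ≤ Fintype.card A ^ 2, ∃ c, u <:+: powL σ n c := by
  classical
  letI : Inhabited A := Classical.inhabited_of_nonempty ‹Nonempty A›
  have hune : u ≠ [] := by intro h; rw [h] at hu2; simp at hu2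
  have hex : ∃ n, ∃ c : A, u <:+: powL σ n c := hL
  set N := Nat.find hex with hN
  have hNspec := Nat.find_spec hex
  refine ⟨N, ?_, hNspec⟩
  by_contra hgt
  push_neg at hgt
  obtain ⟨f, hf⟩ := chainWord hne N u hune (by omega) hNspec
  have len2 : ∀ i : ℕ, i ≤ Fintype.card A ^ 2 → (f i).length = 2 := by
    intro i hi
    have hiN : i ≤ N := by omega
    obtain ⟨h1, h2, h3, h4⟩ := hf i hiN
    by_contra hlen
    have h1' : (f i).length = 1 := by
      have := List.length_pos_iff.mpr h1; omega
    obtain ⟨e, he⟩ := List.length_eq_one_iff.mp h1'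
    rw [he] at h4
    have : ∃ c : A, u <:+: powL σ i c := ⟨e, h4⟩
    have := Nat.find_le (h := hex) this
    omega
  obtain ⟨i, j, hij, hfij⟩ := Fintype.exists_ne_map_eq_of_card_lt
    (fun i : Fin (Fintype.card A ^ 2 + 1) => ((f i).headI, (f i).tail.headI))
    (by rw [Fintype.card_prod, Fintype.card_fin, ← pow_two]; omega)
  have hieq : ∀ i : Fin (Fintype.card A ^ 2 + 1), f i = [(f i).headI, (f i).tail.headI] :=
    fun i => list_eq_pair (len2 i (by have := i.isLt; omega))
  have hfeq : f (i : ℕ) = f (j : ℕ) := by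
    rw [hieq i, hieq j]
    simp only [Prod.mk.injEq] at hfij
    rw [hfij.1, hfij.2]
  have key : ∀ i' j' : ℕ, i' < j' → j' ≤ Fintype.card A ^ 2 → f i' = f j' → False := by
    intro i' j' hlt hle hfe
    obtain ⟨_, _, ⟨c', hc'⟩, _⟩ := hf j' (by omega)
    obtain ⟨_, _, _, h4⟩ := hf i' (by omega)
    rw [hfe] at h4
    have : u <:+: powL σ (i' + (N - j')) c' := by
      have := iterW_infix σ i' hc'
      rw [← powL_add] at this
      exact h4.trans this
    have := Nat.find_le (h := hex) ⟨c', this⟩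
    omega
  have hij' : (i : ℕ) ≠ (j : ℕ) := fun hh => hij (Fin.ext hh)
  rcases lt_or_gt_of_ne hij' with hlt | hgt'
  · exact key i j hlt (by have := j.isLt; omega) hfeq
  · exact key j i hgt' (by have := i.isLt; omega) hfeq.symm

theorem lang2_in_all [Fintype A] [Nonempty A] {σ : A → List A} (hσ : PrimitiveSub σ)
    {a : A} (ha : Prolongable σ a) (u : List A) (hu2 : u.length = 2) (hL : LangOf σ u)
    (b : A) (m : ℕ) (hm : 2 * Fintype.card A ^ 2 ≤ m) : u <:+: powL σ m b := by
  have hne := nonErasing_of hσ ha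
  obtain ⟨n, hn, c, hc⟩ := lang2_small hne u hu2 hL
  have hd1 : 1 ≤ Fintype.card A := Fintype.card_pos
  have hdd : 2 * (Fintype.card A - 1) ≤ Fintype.card A ^ 2 := by
    rcases Nat.lt_or_ge (Fintype.card A) 2 with h | h
    · interval_cases h2 : Fintype.card A <;> simp
    · have : 2 * Fintype.card A ≤ Fintype.card A * Fintype.card A :=
        Nat.mul_le_mul_right _ h
      rw [pow_two]; omega
  have hreach : c ∈ powL σ (m - n) b := reach_all hσ ha c b (m - n) (by omega)
  have := infix_powL_comp σ hc hreach
  rwa [show n + (m - n) = m by omega] at this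

end Aux4
section Aux5

variable {A : Type*}

theorem prefix_piece {x y l r : List A} (h : x ++ y = l ++ r) (hl : l.length ≤ x.length) :
    l <+: x := by
  have h1 : l <+: x ++ y := by rw [h]; exact l.prefix_append r
  exact List.prefix_of_prefix_length_le h1 (x.prefix_append y) hl

theorem cover {g : A → List A} {B : ℕ} (hB1 : 1 ≤ B) (hg : ∀ e, g e ≠ [])
    (hgB : ∀ e, (g e).length ≤ B) :
    ∀ (v pL m pR : List A), pL ++ (m ++ pR) = v.flatMap g → 2 * B ≤ m.length + 1 →
      ∃ e, g e <:+: m := by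
  intro v
  induction v with
  | nil =>
    intro pL m pR heq hlen
    simp only [List.flatMap_nil] at heq
    rw [List.append_eq_nil_iff, List.append_eq_nil_iff] at heq
    rw [heq.2.1] at hlen
    simp at hlen
    omega
  | cons e v' ih =>
    intro pL m pR heq hlen
    rw [List.flatMap_cons] at heq
    rcases List.append_eq_append_iff.mp heq with ⟨a', hge, hmp⟩ | ⟨c', hpLe, hrest⟩
    · have hmlen : 2 * B - 1 ≤ m.length := by omega
      have halen : a'.length ≤ B := by
        have := hgB e
        have : (g e).length = pL.length + a'.length := by rw [hge]; simp
        omega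
      rcases eq_or_ne pL [] with rfl | hpLne
      · -- g e = a'
        have hga : g e = a' := by simpa using hge
        have hpm : a' <+: m := prefix_piece hmp (by omega)
        exact ⟨e, hga ▸ hpm.isInfix⟩
      · have halen' : a'.length ≤ B - 1 := by
          have hpl : 1 ≤ pL.length := List.length_pos_iff.mpr hpLne
          have hgel : (g e).length = pL.length + a'.length := by rw [hge]; simp
          have := hgB e
          omega
        obtain ⟨m'', rfl⟩ := prefix_piece hmp (by omega)
        rw [List.append_assoc] at hmp
        have hmp' : m'' ++ pR = v'.flatMap g := List.append_cancel_left hmp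
        have hm''len : B ≤ m''.length := by
          have : (a' ++ m'').length = a'.length + m''.length := by simp
          omega
        -- v' nonempty, first block inside m''
        cases v' with
        | nil =>
          simp only [List.flatMap_nil, List.append_eq_nil_iff] at hmp'
          rw [hmp'.1] at hm''len
          simp at hm''len
          omega
        | cons e2 v'' =>
          rw [List.flatMap_cons] at hmp'
          have hp2 : g e2 <+: m'' := prefix_piece hmp' (le_trans (hgB e2) hm''len)
          obtain ⟨t, rfl⟩ := hp2
          exact ⟨e2, a', t, by simp⟩
    · exact ih c' m pR hrest.symm hlen

theorem occ_ge_three [DecidableEq A] {u w : List A} {q s : ℕ}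
    (h0 : u <+: w) (hq : u <+: w.drop q) (hs : u <+: w.drop s)
    (h0q : 0 < q) (hqs : q < s) (hsw : s ≤ w.length) : 3 ≤ occCount u w := by
  classical
  rw [occCount, List.countP_eq_length_filter]
  set l := (List.range (w.length + 1)).filter (fun i => decide (u <+: w.drop i)) with hl
  have hnd : l.Nodup := List.Nodup.filter _ List.nodup_range
  have hmem : ∀ i, i ≤ w.length → u <+: w.drop i → i ∈ l := by
    intro i h1 h2
    rw [hl, List.mem_filter]
    exact ⟨List.mem_range.mpr (by omega), by simpa using h2⟩
  have h0' : 0 ∈ l := hmem 0 (by omega) (by simpa using h0)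
  have hq' : q ∈ l := hmem q (by omega) hq
  have hs' : s ∈ l := hmem s hsw hs
  have hsub : ({0, q, s} : Finset ℕ) ⊆ l.toFinset := by
    intro z hz
    simp only [Finset.mem_insert, Finset.mem_singleton] at hz
    rcases hz with rfl | rfl | rfl <;> simpa [List.mem_toFinset]
  have hcard : ({0, q, s} : Finset ℕ).card = 3 := by
    rw [Finset.card_insert_of_notMem (by simp; omega),
      Finset.card_insert_of_notMem (by simp; omega), Finset.card_singleton]
  have := Finset.card_le_card hsub
  rw [List.toFinset_card_of_nodup hnd] at this
  omega

end Aux5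
theorem stmt17 {A : Type*} [Fintype A] [Nonempty A] [DecidableEq A]
    (σ : A → List A) (hσ : PrimitiveSub σ) (a : A) (ha : Prolongable σ a) :
    ∀ u r : List A, u.length = 2 → LangOf σ u → ReturnWordLang σ u r →
      r.length ≤ 2 * maxLen σ 1 ^ (2 * Fintype.card A ^ 2) := by
  intro u r hu hLu hR
  obtain ⟨hLru, hpre, hocc⟩ := hR
  set T := 2 * Fintype.card A ^ 2 with hT
  set M := maxLen σ 1 with hM
  have hne := nonErasing_of hσ ha
  have hM1 : 1 ≤ M := one_le_maxLen hne
  have hB1 : 1 ≤ M ^ T := Nat.one_le_pow T M hM1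
  obtain ⟨n, c₀, hinf⟩ := hLru
  rcases Nat.lt_or_ge n T with hnT | hnT
  · -- short case: the whole word fits in one σⁿ-image
    have hlen := hinf.length_le
    have hlen2 : (powL σ n c₀).length ≤ M ^ n := length_powL_le σ n c₀
    have hmono : M ^ n ≤ M ^ T := Nat.pow_le_pow_right hM1 (le_of_lt hnT)
    have hru : (r ++ u).length = r.length + 2 := by rw [List.length_append, hu]
    omega
  · by_contra hcon
    push_neg at hcon
    have hrlen : 2 * M ^ T + 1 ≤ r.length := hcon
    obtain ⟨u0, u1, rfl⟩ := List.length_eq_two.mp hu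
    have hrne : r ≠ [] := by
      intro h
      rw [h, List.length_nil] at hrlen
      omega
    obtain ⟨hd, r1, rfl⟩ := List.exists_cons_of_ne_nil hrne
    set m : List A := r1 ++ [u0] with hm
    have hmlen : m.length = (hd :: r1).length := by simp [hm]
    have hmlen2 : m.length = r1.length + 1 := by simp [hm]
    have hrlen2 : 2 * M ^ T + 1 ≤ r1.length + 1 := by simpa using hrlen
    obtain ⟨pL0, pR0, heq0⟩ := hinf
    have hflat : (powL σ (n - T) c₀).flatMap (fun e => powL σ T e) = powL σ n c₀ := by
      rw [← iterW_flatMap, ← powL_add, show T + (n - T) = n by omega]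
    have heq1 : (pL0 ++ [hd]) ++ (m ++ ([u1] ++ pR0)) =
        (powL σ (n - T) c₀).flatMap (fun e => powL σ T e) := by
      rw [hflat, ← heq0, hm]
      simp
    obtain ⟨e, hge⟩ := cover hB1 (powL_ne_nil hne T) (length_powL_le σ T)
      (powL σ (n - T) c₀) (pL0 ++ [hd]) m ([u1] ++ pR0) heq1 (by omega)
    have huge : [u0, u1] <:+: powL σ T e := lang2_in_all hσ ha _ hu hLu e T le_rfl
    have hum : [u0, u1] <:+: m := huge.trans hge
    obtain ⟨m1, m2, hm12⟩ := hum
    have hlm : m1.length + 2 + m2.length = m.length := by rw [← hm12]; simp; omega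
    have hw : (hd :: r1) ++ [u0, u1] = ([hd] ++ m1) ++ ([u0, u1] ++ (m2 ++ [u1])) := by
      have h1 : (hd :: r1) ++ [u0, u1] = [hd] ++ (r1 ++ [u0]) ++ [u1] := by simp
      rw [h1, ← hm, ← hm12]
      simp
    set q := 1 + m1.length with hqdef
    have hq : [u0, u1] <+: ((hd :: r1) ++ [u0, u1]).drop q := by
      rw [hw, List.drop_left' (show ([hd] ++ m1).length = q by simp [hqdef]; omega)]
      exact List.prefix_append _ _
    have hs : [u0, u1] <+: ((hd :: r1) ++ [u0, u1]).drop (hd :: r1).length := by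
      rw [List.drop_left]
    have hslen : (hd :: r1).length = r1.length + 1 := by simp
    have h3 := occ_ge_three hpre hq hs (by omega) (by omega) (by simp)
    omega
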